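/- arXiv:0804.0741 — 7 statements merged into one kernel-verified Lean document; each statement's English description precedes it below -/
import Mathlib

section
/- Let (Ω, F, P) be a probability space and x, y nonnegative bounded random variables with y bounded below by a positive constant. Then the supremum over all nonnegative random variables p with E[p] = 1 of the ratio E[p·x]/E[p·y] equals esssup(x/y). -/
open MeasureTheory
open scoped ENNReal

/-- Lemma 1, eq. (3.5): for bounded nonnegative random variables `x, y` with `y`
bounded below by a positive constant, the supremum over all nonnegative random
variables `p` with `E[p] = 1` of the ratio `E[p·x]/E[p·y]` equals the essential
supremum of `x/y`. -/
theorem stmt3 {Ω : Type*} [MeasurableSpace Ω] (μ : Measure Ω) [IsProbabilityMeasure μ]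
    (x y : Ω → ℝ≥0∞) (hx : Measurable x) (hy : Measurable y)
    (c C : ℝ≥0∞) (hc : 0 < c) (hC : C < ∞)
    (hxC : ∀ᵐ ω ∂μ, x ω ≤ C) (hyC : ∀ᵐ ω ∂μ, y ω ≤ C)
    (hyc : ∀ᵐ ω ∂μ, c ≤ y ω) :
    (⨆ p ∈ {p : Ω → ℝ≥0∞ | Measurable p ∧ ∫⁻ ω, p ω ∂μ = 1},
      (∫⁻ ω, p ω * x ω ∂μ) / (∫⁻ ω, p ω * y ω ∂μ))
      = essSup (fun ω => x ω / y ω) μ := by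
  set M := essSup (fun ω => x ω / y ω) μ with hM
  apply le_antisymm
  · -- upper bound
    refine iSup₂_le fun p hp => ?_
    have hae : ∀ᵐ ω ∂μ, p ω * x ω ≤ M * (p ω * y ω) := by
      filter_upwards [ae_le_essSup (f := fun ω => x ω / y ω) (μ := μ), hyC, hyc]
        with ω h1 h2 h3
      have hy0 : y ω ≠ 0 := (hc.trans_le h3).ne'
      have hyt : y ω ≠ ∞ := (h2.trans_lt hC).ne
      have : x ω ≤ M * y ω := by
        calc x ω = x ω / y ω * y ω := (ENNReal.div_mul_cancel hy0 hyt).symm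
        _ ≤ M * y ω := mul_le_mul_left h1 _
      calc p ω * x ω ≤ p ω * (M * y ω) := mul_le_mul_right this _
      _ = M * (p ω * y ω) := by ring
    have hint : ∫⁻ ω, p ω * x ω ∂μ ≤ M * ∫⁻ ω, p ω * y ω ∂μ := by
      calc ∫⁻ ω, p ω * x ω ∂μ ≤ ∫⁻ ω, M * (p ω * y ω) ∂μ := lintegral_mono_ae hae
      _ = M * ∫⁻ ω, p ω * y ω ∂μ := lintegral_const_mul M (hp.1.mul hy)
    exact ENNReal.div_le_of_le_mul hint
  · refine le_of_forall_lt_imp_le_of_dense fun t ht => ?_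
    -- the set where x/y > t has positive measure
    set A := {ω | t < x ω / y ω} with hA
    have hAm : MeasurableSet A := measurableSet_lt measurable_const (hx.div hy)
    have hA0 : μ A ≠ 0 := by
      intro h0
      have : ∀ᵐ ω ∂μ, x ω / y ω ≤ t := by
        rw [ae_iff]; simpa [A, not_le] using h0
      exact absurd (essSup_le_of_ae_le t this) (not_le.2 ht)
    have hAt : μ A ≠ ∞ := (measure_lt_top μ A).ne
    set p : Ω → ℝ≥0∞ := A.indicator fun _ => (μ A)⁻¹ with hp
    have hpm : Measurable p := measurable_const.indicator hAm
    have hp1 : ∫⁻ ω, p ω ∂μ = 1 := by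
      rw [hp, lintegral_indicator hAm, setLIntegral_const, ENNReal.inv_mul_cancel hA0 hAt]
    have key : ∀ f : Ω → ℝ≥0∞, ∫⁻ ω, p ω * f ω ∂μ = (μ A)⁻¹ * ∫⁻ ω in A, f ω ∂μ := by
      intro f
      rw [hp]
      rw [← lintegral_indicator hAm, ← lintegral_const_mul' _ _ (ENNReal.inv_ne_top.2 hA0)]
      congr 1
      ext ω
      by_cases h : ω ∈ A <;> simp [h]
    -- lower bound on numerator over A
    have hxy : ∀ᵐ ω ∂μ, ω ∈ A → t * y ω ≤ x ω := by
      filter_upwards [hyC, hyc] with ω h2 h3 hωA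
      have hy0 : y ω ≠ 0 := (hc.trans_le h3).ne'
      have hyt : y ω ≠ ∞ := (h2.trans_lt hC).ne
      exact ((ENNReal.lt_div_iff_mul_lt (Or.inl hy0) (Or.inl hyt)).1 hωA).le
    have hnum : t * ∫⁻ ω in A, y ω ∂μ ≤ ∫⁻ ω in A, x ω ∂μ := by
      rw [← lintegral_const_mul t hy]
      exact setLIntegral_mono_ae (hx.aemeasurable) hxy
    have hden0 : ∫⁻ ω in A, y ω ∂μ ≠ 0 := by
      intro h0
      have : c * μ A ≤ ∫⁻ ω in A, y ω ∂μ := by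
        rw [← setLIntegral_const A c]
        exact setLIntegral_mono_ae hy.aemeasurable (hyc.mono fun ω h _ => h)
      rw [h0, nonpos_iff_eq_zero] at this
      exact hA0 (by simpa [hc.ne'] using this)
    have hdent : ∫⁻ ω in A, y ω ∂μ ≠ ∞ := by
      have : ∫⁻ ω in A, y ω ∂μ ≤ C * μ A := by
        rw [← setLIntegral_const A C]
        exact setLIntegral_mono_ae measurable_const.aemeasurable (hyC.mono fun ω h _ => h)
      exact (this.trans_lt (ENNReal.mul_lt_top hC (measure_lt_top μ A))).ne
    have hratio : t < (∫⁻ ω, p ω * x ω ∂μ) / (∫⁻ ω, p ω * y ω ∂μ) ∨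
        t ≤ (∫⁻ ω, p ω * x ω ∂μ) / (∫⁻ ω, p ω * y ω ∂μ) := by
      right
      rw [key x, key y, ENNReal.le_div_iff_mul_le
        (Or.inl (mul_ne_zero (ENNReal.inv_ne_zero.2 hAt) hden0))
        (Or.inl (ENNReal.mul_ne_top (ENNReal.inv_ne_top.2 hA0) hdent))]
      calc t * ((μ A)⁻¹ * ∫⁻ ω in A, y ω ∂μ) = (μ A)⁻¹ * (t * ∫⁻ ω in A, y ω ∂μ) := by ring
      _ ≤ (μ A)⁻¹ * ∫⁻ ω in A, x ω ∂μ := mul_le_mul_right hnum _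
    have hle : t ≤ (∫⁻ ω, p ω * x ω ∂μ) / (∫⁻ ω, p ω * y ω ∂μ) := hratio.elim le_of_lt id
    have hmem : p ∈ {p : Ω → ℝ≥0∞ | Measurable p ∧ ∫⁻ ω, p ω ∂μ = 1} := ⟨hpm, hp1⟩
    calc t ≤ (∫⁻ ω, p ω * x ω ∂μ) / (∫⁻ ω, p ω * y ω ∂μ) := hle
    _ ≤ _ := le_biSup (fun p => (∫⁻ ω, p ω * x ω ∂μ) / (∫⁻ ω, p ω * y ω ∂μ)) hmem
end

section
/- Let a ≠ 0, b ≠ 0, λ > 0, ν ≥ 0, r = (−a + √(a² + 2λb²))/b², and A = (b²/(2a))(a r/λ − 1). Define f : (−∞, ν] → ℝ by f(y) = (1/a)[−y + ν + A(e^{−2ya/b²} − e^{−2νa/b²})] for 0 ≤ y ≤ ν, and f(y) = (1/a)[ν + A(1 − e^{−2νa/b²})] + (1/λ)(1 − e^{ry}) for y < 0. Then f satisfies the delay differential equation a f'(y) + 0.5 b² f''(y) + λ (f(y⁺) − f(y)) = −1 for all y ≤ ν, where y⁺ = max(y, 0), and f(ν) = 0. -/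
private lemma expc_hasDerivAt (c y : ℝ) :
    HasDerivAt (fun x : ℝ => Real.exp (c * x)) (c * Real.exp (c * y)) y := by
  have h1 : HasDerivAt (fun x : ℝ => c * x) c y := by
    simpa using (hasDerivAt_id y).const_mul c
  simpa [mul_comm, Function.comp_def] using (Real.hasDerivAt_exp (c * y)).comp y h1

private lemma glue_hasDerivAt (L R l r0 f : ℝ → ℝ)
    (hL : ∀ y, HasDerivAt L (l y) y) (hR : ∀ y, HasDerivAt R (r0 y) y)
    (h0 : L 0 = R 0) (h0' : l 0 = r0 0)
    (hf : ∀ y, f y = if y < 0 then L y else R y) :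
    ∀ y, HasDerivAt f (if y < 0 then l y else r0 y) y := by
  intro y
  rcases lt_trichotomy y 0 with hy | hy | hy
  · rw [if_pos hy]
    refine (hL y).congr_of_eventuallyEq ?_
    filter_upwards [Iio_mem_nhds hy] with x hx
    rw [hf x, if_pos (Set.mem_Iio.mp hx)]
  · subst hy
    rw [if_neg (lt_irrefl 0)]
    have hfL : ∀ x ∈ Set.Iic (0:ℝ), f x = L x := by
      intro x hx
      rcases lt_or_eq_of_le (Set.mem_Iic.mp hx) with h | h
      · rw [hf x, if_pos h]
      · subst h; rw [hf 0, if_neg (lt_irrefl 0), ← h0]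
    have hIic : HasDerivWithinAt f (r0 0) (Set.Iic 0) 0 := by
      rw [← h0']
      exact (hL 0).hasDerivWithinAt.congr hfL (hfL 0 Set.self_mem_Iic)
    have hIci : HasDerivWithinAt f (r0 0) (Set.Ici 0) 0 := by
      have hfR : ∀ x ∈ Set.Ici (0:ℝ), f x = R x := by
        intro x hx; rw [hf x, if_neg (not_lt.2 (Set.mem_Ici.mp hx))]
      exact (hR 0).hasDerivWithinAt.congr hfR (hfR 0 Set.self_mem_Ici)
    have h := hIic.union hIci
    rw [Set.Iic_union_Ici] at h
    exact hasDerivWithinAt_univ.mp h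
  · rw [if_neg (not_lt.2 hy.le)]
    refine (hR y).congr_of_eventuallyEq ?_
    filter_upwards [Ioi_mem_nhds hy] with x hx
    rw [hf x, if_neg (not_lt.2 (Set.mem_Ioi.mp hx).le)]

/-- Theorem 1 (verification step): the function `f` of eq. (4.5) satisfies the
delay differential equation `a f'(y) + 0.5 b² f''(y) + λ (f(y⁺) − f(y)) = −1`
for all `y ≤ ν` (with `y⁺ = max(y,0)`), together with the boundary condition
`f(ν) = 0`. -/
theorem stmt8 (a b lam ν : ℝ) (ha : a ≠ 0) (hb : b ≠ 0) (hlam : 0 < lam) (hν : 0 ≤ ν)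
    (r A : ℝ)
    (hr : r = (-a + Real.sqrt (a ^ 2 + 2 * lam * b ^ 2)) / b ^ 2)
    (hA : A = (b ^ 2 / (2 * a)) * (a * r / lam - 1))
    (f : ℝ → ℝ)
    (hf : ∀ y, f y =
      if y < 0 then
        (1 / a) * (ν + A * (1 - Real.exp (-2 * ν * a / b ^ 2)))
          + (1 / lam) * (1 - Real.exp (r * y))
      else
        (1 / a) * (-y + ν + A * (Real.exp (-2 * y * a / b ^ 2)
          - Real.exp (-2 * ν * a / b ^ 2)))) :
    (∀ y ≤ ν,
      a * deriv f y + 0.5 * b ^ 2 * deriv (deriv f) y + lam * (f (max y 0) - f y) = -1)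
    ∧ f ν = 0 := by
  have hb2 : b ^ 2 ≠ 0 := pow_ne_zero 2 hb
  have hlam' : lam ≠ 0 := hlam.ne'
  -- key algebraic identity: b² r²/2 + a r = lam
  have hkey : b ^ 2 * r ^ 2 / 2 + a * r = lam := by
    have hs : Real.sqrt (a ^ 2 + 2 * lam * b ^ 2) ^ 2 = a ^ 2 + 2 * lam * b ^ 2 := by
      apply Real.sq_sqrt
      positivity
    subst hr
    field_simp
    rw [show a ^ 2 + b ^ 2 * 2 * lam = a ^ 2 + 2 * lam * b ^ 2 by ring]
    nlinarith [hs]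
  set E := Real.exp (-2 * ν * a / b ^ 2) with hE
  set C := (1 / a) * (ν + A * (1 - E)) with hC
  set L : ℝ → ℝ := fun y => C + (1 / lam) * (1 - Real.exp (r * y)) with hLdef
  set R : ℝ → ℝ := fun y =>
    (1 / a) * (-y + ν + A * (Real.exp (-2 * y * a / b ^ 2) - E)) with hRdef
  set l : ℝ → ℝ := fun y => -(r / lam) * Real.exp (r * y) with hldef
  set r0 : ℝ → ℝ := fun y =>
    (1 / a) * (-1 + A * ((-2 * a / b ^ 2) * Real.exp (-2 * y * a / b ^ 2))) with hr0def
  set l' : ℝ → ℝ := fun y => -(r / lam) * (r * Real.exp (r * y)) with hl'def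
  set r0' : ℝ → ℝ := fun y =>
    (1 / a) * (A * ((-2 * a / b ^ 2) * ((-2 * a / b ^ 2) * Real.exp (-2 * y * a / b ^ 2))))
    with hr0'def
  -- derivative of inner exponential in R
  have hinner : ∀ y : ℝ, HasDerivAt (fun x : ℝ => -2 * x * a / b ^ 2) (-2 * a / b ^ 2) y := by
    intro y
    have heq : (fun x : ℝ => -2 * x * a / b ^ 2) = fun x : ℝ => (-2 * a / b ^ 2) * x := by
      funext x; ring
    rw [heq]
    simpa using (hasDerivAt_id y).const_mul (-2 * a / b ^ 2)
  have hexpR : ∀ y : ℝ, HasDerivAt (fun x : ℝ => Real.exp (-2 * x * a / b ^ 2))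
      ((-2 * a / b ^ 2) * Real.exp (-2 * y * a / b ^ 2)) y := by
    intro y
    simpa [mul_comm, Function.comp_def] using (Real.hasDerivAt_exp (-2 * y * a / b ^ 2)).comp y (hinner y)
  have hL : ∀ y, HasDerivAt L (l y) y := by
    intro y
    have h1 : HasDerivAt (fun x : ℝ => C + (1 / lam) * (1 - Real.exp (r * x)))
        ((1 / lam) * (0 - r * Real.exp (r * y))) y :=
      (((hasDerivAt_const y (1:ℝ)).sub (expc_hasDerivAt r y)).const_mul (1 / lam)).const_add C
    rw [hLdef, hldef]
    convert h1 using 1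
    ring
  have hR : ∀ y, HasDerivAt R (r0 y) y := by
    intro y
    have h1 : HasDerivAt (fun x : ℝ =>
        (1 / a) * (-x + ν + A * (Real.exp (-2 * x * a / b ^ 2) - E)))
        ((1 / a) * (-1 + ν * 0 + A * ((-2 * a / b ^ 2) * Real.exp (-2 * y * a / b ^ 2)))) y := by
      have hid : HasDerivAt (fun x : ℝ => -x + ν) (-1 + ν * 0) y := by
        simpa using ((hasDerivAt_id y).neg.add_const ν)
      exact (hid.add (((hexpR y).sub_const E).const_mul A)).const_mul (1 / a)
    rw [hRdef, hr0def]
    convert h1 using 1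
    ring
  have hl : ∀ y, HasDerivAt l (l' y) y := by
    intro y
    rw [hldef, hl'def]
    exact (expc_hasDerivAt r y).const_mul (-(r / lam))
  have hr0 : ∀ y, HasDerivAt r0 (r0' y) y := by
    intro y
    rw [hr0def, hr0'def]
    exact ((((hexpR y).const_mul (-2 * a / b ^ 2)).const_mul A).const_add (-1)).const_mul (1 / a)
  -- junction values
  have h0 : L 0 = R 0 := by
    rw [hLdef, hRdef, hC]
    norm_num
  have h0' : l 0 = r0 0 := by
    rw [hldef, hr0def, hA]
    norm_num
    field_simp
    ring
  have h1' : l' 0 = r0' 0 := by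
    rw [hl'def, hr0'def, hA]
    norm_num
    field_simp
    linear_combination (-2) * hkey
  have hfLR : ∀ y, f y = if y < 0 then L y else R y := by
    intro y
    rw [hf y]
  set g : ℝ → ℝ := fun y => if y < 0 then l y else r0 y with hgdef
  set h : ℝ → ℝ := fun y => if y < 0 then l' y else r0' y with hhdef
  have hfg : ∀ y, HasDerivAt f (g y) y :=
    glue_hasDerivAt L R l r0 f hL hR h0 h0' hfLR
  have hgh : ∀ y, HasDerivAt g (h y) y :=
    glue_hasDerivAt l r0 l' r0' g hl hr0 h0' h1' (fun y => rfl)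
  have hderivf : deriv f = g := funext fun y => (hfg y).deriv
  have hderiv2 : ∀ y, deriv (deriv f) y = h y := by
    intro y
    rw [hderivf]
    exact (hgh y).deriv
  constructor
  · intro y hy
    rw [hderiv2 y, hderivf]
    by_cases hy0 : y < 0
    · have hmax : max y 0 = 0 := max_eq_right hy0.le
      rw [hmax, hgdef, hhdef]
      simp only [if_pos hy0]
      rw [hf 0, hf y, if_neg (lt_irrefl 0), if_pos hy0, hldef, hl'def]
      have hz : (-2 * 0 * a / b ^ 2 : ℝ) = 0 := by ring
      rw [hz, Real.exp_zero]
      beta_reduce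
      linear_combination (norm := (field_simp; ring)) (-(Real.exp (r * y)) / lam) * hkey + (-lam) * hC
    · have hmax : max y 0 = y := max_eq_left (not_lt.1 hy0)
      rw [hmax, hgdef, hhdef]
      simp only [if_neg hy0]
      rw [hr0def, hr0'def]
      field_simp
      ring
  · rw [hf ν, if_neg (not_lt.2 hν)]
    ring
end

section
/- With the function f of the previous context (a ≠ 0, b ≠ 0, λ > 0, ν ≥ 0, r and A as defined), f is twice continuously differentiable on (−∞, ν], i.e., the two piecewise formulas and their first and second derivatives match at y = 0. -/
private noncomputable def pw (p q : ℝ → ℝ) : ℝ → ℝ := fun y => if y < 0 then p y else q y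

private lemma pw_hasDerivAt (f p q p' q' : ℝ → ℝ)
    (hfp : ∀ y ≤ (0:ℝ), f y = p y) (hfq : ∀ y : ℝ, 0 ≤ y → f y = q y)
    (hp : ∀ y, HasDerivAt p (p' y) y) (hq : ∀ y, HasDerivAt q (q' y) y)
    (e : p' 0 = q' 0) :
    ∀ y, HasDerivAt f (pw p' q' y) y := by
  intro y
  rcases lt_trichotomy y 0 with h | h | h
  · have hev : f =ᶠ[nhds y] p := by
      filter_upwards [Iio_mem_nhds h] with t ht
      exact hfp t (le_of_lt ht)
    have h1 : HasDerivAt f (p' y) y := (hp y).congr_of_eventuallyEq hev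
    simpa [pw, if_pos h] using h1
  · subst h
    have h1 : HasDerivWithinAt f (p' 0) (Set.Iic 0) 0 :=
      ((hp 0).hasDerivWithinAt).congr (fun t ht => hfp t ht) (hfp 0 le_rfl)
    have h2 : HasDerivWithinAt f (p' 0) (Set.Ici 0) 0 := by
      rw [e]
      exact ((hq 0).hasDerivWithinAt).congr (fun t ht => hfq t ht) (hfq 0 le_rfl)
    have h3 := h1.union h2
    rw [Set.Iic_union_Ici] at h3
    have h4 := hasDerivWithinAt_univ.mp h3
    rw [e] at h4
    simpa [pw, lt_irrefl] using h4
  · have hev : f =ᶠ[nhds y] q := by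
      filter_upwards [Ioi_mem_nhds h] with t ht
      exact hfq t (le_of_lt ht)
    have h1 : HasDerivAt f (q' y) y := (hq y).congr_of_eventuallyEq hev
    simpa [pw, not_lt.2 (le_of_lt h)] using h1

private lemma pw_continuous (p q : ℝ → ℝ) (hp : Continuous p) (hq : Continuous q)
    (e : p 0 = q 0) : Continuous (pw p q) := by
  have h : pw p q = fun y => if y ≤ 0 then p y else q y := by
    funext y
    rcases lt_trichotomy y 0 with h | h | h
    · simp [pw, if_pos h, if_pos (le_of_lt h)]
    · subst h; simp [pw, e]
    · simp only [pw]; rw [if_neg (not_lt.2 (le_of_lt h)), if_neg (not_le.2 h)]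
  rw [h]
  exact hp.if_le hq continuous_id continuous_const (fun x hx => by have hx0 : x = 0 := hx; subst hx0; exact e)

private lemma glue (f p q p' q' p'' q'' : ℝ → ℝ)
    (hfp : ∀ y ≤ (0:ℝ), f y = p y) (hfq : ∀ y : ℝ, 0 ≤ y → f y = q y)
    (hp : ∀ y, HasDerivAt p (p' y) y) (hq : ∀ y, HasDerivAt q (q' y) y)
    (hp' : ∀ y, HasDerivAt p' (p'' y) y) (hq' : ∀ y, HasDerivAt q' (q'' y) y)
    (hcp : Continuous p'') (hcq : Continuous q'')
    (e1 : p' 0 = q' 0) (e2 : p'' 0 = q'' 0) :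
    ContDiff ℝ 2 f := by
  have hD1 := pw_hasDerivAt f p q p' q' hfp hfq hp hq e1
  have hfp' : ∀ y ≤ (0:ℝ), pw p' q' y = p' y := by
    intro y hy
    rcases eq_or_lt_of_le hy with h | h
    · subst h; simp [pw, e1]
    · simp [pw, if_pos h]
  have hfq' : ∀ y : ℝ, 0 ≤ y → pw p' q' y = q' y := by
    intro y hy; simp [pw, not_lt.2 hy]
  have hD2 := pw_hasDerivAt (pw p' q') p' q' p'' q'' hfp' hfq' hp' hq' e2
  rw [show (2 : WithTop ℕ∞) = 1 + 1 from rfl, contDiff_succ_iff_deriv]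
  refine ⟨fun y => (hD1 y).differentiableAt, by simp, ?_⟩
  rw [show deriv f = pw p' q' from funext fun y => (hD1 y).deriv, contDiff_one_iff_deriv]
  refine ⟨fun y => (hD2 y).differentiableAt, ?_⟩
  rw [show deriv (pw p' q') = pw p'' q'' from funext fun y => (hD2 y).deriv]
  exact pw_continuous _ _ hcp hcq e2

/-- Remark 1: the function `f` of eq. (4.5) is twice continuously differentiable
on `(−∞, ν]`; the two piecewise formulas and their first and second derivatives
match at `y = 0`. -/
theorem stmt9 (a b lam ν : ℝ) (ha : a ≠ 0) (hb : b ≠ 0) (hlam : 0 < lam) (hν : 0 ≤ ν)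
    (r A : ℝ)
    (hr : r = (-a + Real.sqrt (a ^ 2 + 2 * lam * b ^ 2)) / b ^ 2)
    (hA : A = (b ^ 2 / (2 * a)) * (a * r / lam - 1))
    (f : ℝ → ℝ)
    (hf : ∀ y, f y =
      if y < 0 then
        (1 / a) * (ν + A * (1 - Real.exp (-2 * ν * a / b ^ 2)))
          + (1 / lam) * (1 - Real.exp (r * y))
      else
        (1 / a) * (-y + ν + A * (Real.exp (-2 * y * a / b ^ 2)
          - Real.exp (-2 * ν * a / b ^ 2)))) :
    ContDiffOn ℝ 2 f (Set.Iic ν) := by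
  have hb2 : b ^ 2 ≠ 0 := pow_ne_zero 2 hb
  have hquad : b ^ 2 * r ^ 2 + 2 * a * r - 2 * lam = 0 := by
    have hpos : (0:ℝ) ≤ a ^ 2 + 2 * lam * b ^ 2 := by positivity
    have hs : Real.sqrt (a ^ 2 + 2 * lam * b ^ 2) ^ 2 = a ^ 2 + 2 * lam * b ^ 2 :=
      Real.sq_sqrt hpos
    have h1 : r * b ^ 2 = -a + Real.sqrt (a ^ 2 + 2 * lam * b ^ 2) := by
      rw [hr]; field_simp
    have h2 : (r * b ^ 2 + a) ^ 2 = a ^ 2 + 2 * lam * b ^ 2 := by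
      rw [show r * b ^ 2 + a = Real.sqrt (a ^ 2 + 2 * lam * b ^ 2) by rw [h1]; ring, hs]
    have h3 : b ^ 2 * (b ^ 2 * r ^ 2 + 2 * a * r - 2 * lam) = 0 := by nlinarith [h2]
    exact (mul_eq_zero.1 h3).resolve_left hb2
  have hlam' : lam ≠ 0 := ne_of_gt hlam
  -- inner linear function derivative
  have hin : ∀ y : ℝ, HasDerivAt (fun y : ℝ => -2 * y * a / b ^ 2) (-2 * a / b ^ 2) y := by
    intro y
    have h : (fun y : ℝ => -2 * y * a / b ^ 2) = fun y : ℝ => (-2 * a / b ^ 2) * y := by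
      funext t; ring
    rw [h]
    simpa using (hasDerivAt_id y).const_mul (-2 * a / b ^ 2)
  have hry : ∀ y : ℝ, HasDerivAt (fun y : ℝ => r * y) r y := by
    intro y; simpa using (hasDerivAt_id y).const_mul r
  have key : ContDiff ℝ 2 f := by
    apply glue f
      (fun y => (1 / a) * (ν + A * (1 - Real.exp (-2 * ν * a / b ^ 2)))
        + (1 / lam) * (1 - Real.exp (r * y)))
      (fun y => (1 / a) * (-y + ν + A * (Real.exp (-2 * y * a / b ^ 2)
        - Real.exp (-2 * ν * a / b ^ 2))))
      (fun y => -(1 / lam) * (r * Real.exp (r * y)))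
      (fun y => (1 / a) * (-1 + A * (Real.exp (-2 * y * a / b ^ 2) * (-2 * a / b ^ 2))))
      (fun y => -(1 / lam) * (r * (Real.exp (r * y) * r)))
      (fun y => (1 / a) * (A * (Real.exp (-2 * y * a / b ^ 2) * (-2 * a / b ^ 2) * (-2 * a / b ^ 2))))
    -- f = p on (-∞,0]
    · intro y hy
      rw [hf y]
      rcases eq_or_lt_of_le hy with h | h
      · subst h
        rw [if_neg (lt_irrefl 0)]
        simp only [mul_zero, zero_mul, neg_zero, zero_div, Real.exp_zero, neg_zero]
        ring_nf
      · rw [if_pos h]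
    -- f = q on [0,∞)
    · intro y hy
      rw [hf y, if_neg (not_lt.2 hy)]
    -- deriv of p
    · intro y
      have h2 := (hry y).exp
      have h3 := ((HasDerivAt.const_sub 1 h2).const_mul (1 / lam)).const_add
        ((1 / a) * (ν + A * (1 - Real.exp (-2 * ν * a / b ^ 2))))
      convert h3 using 1 <;> try rfl
      ring
    -- deriv of q
    · intro y
      have h2 := (hin y).exp
      have h3 := HasDerivAt.const_mul A (h2.sub_const (Real.exp (-2 * ν * a / b ^ 2)))
      have h4 := ((hasDerivAt_id y).neg.add_const ν).add h3
      have h5 := HasDerivAt.const_mul (1 / a) h4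
      convert h5 using 1 <;> try rfl
    -- deriv of p'
    · intro y
      have h2 := ((hry y).exp.const_mul r).const_mul (-(1 / lam))
      convert h2 using 1 <;> try rfl
    -- deriv of q'
    · intro y
      have h2 := ((hin y).exp.mul_const (-2 * a / b ^ 2)).const_mul A
      have h3 := (h2.const_add (-1)).const_mul (1 / a)
      convert h3 using 1 <;> try rfl
    -- continuity of p''
    · fun_prop
    -- continuity of q''
    · fun_prop
    -- first derivative match
    · show -(1 / lam) * (r * Real.exp (r * 0)) =
        (1 / a) * (-1 + A * (Real.exp (-2 * 0 * a / b ^ 2) * (-2 * a / b ^ 2)))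
      subst hA
      simp only [mul_zero, Real.exp_zero, neg_zero, zero_mul, zero_div]
      field_simp
      ring
    -- second derivative match
    · show -(1 / lam) * (r * (Real.exp (r * 0) * r)) =
        (1 / a) * (A * (Real.exp (-2 * 0 * a / b ^ 2) * (-2 * a / b ^ 2) * (-2 * a / b ^ 2)))
      subst hA
      simp only [mul_zero, Real.exp_zero, neg_zero, zero_mul, zero_div]
      field_simp
      linear_combination (-1) * hquad
  exact key.contDiffOn
end

section
/- Let a > 0, b ≠ 0, λ > 0, ν ≥ 0 and f as above. Then f is strictly decreasing on (−∞, ν] and is uniformly bounded there, with 0 ≤ f(y) ≤ f(0) + 1/λ for all y ≤ ν. -/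
/-- For `a > 0` the function `f` of eq. (4.5) is strictly decreasing on
`(−∞, ν]` and uniformly bounded there, with `0 ≤ f(y) ≤ f(0) + 1/λ` for all
`y ≤ ν`. -/
theorem stmt10 (a b lam ν : ℝ) (ha : 0 < a) (hb : b ≠ 0) (hlam : 0 < lam) (hν : 0 ≤ ν)
    (r A : ℝ)
    (hr : r = (-a + Real.sqrt (a ^ 2 + 2 * lam * b ^ 2)) / b ^ 2)
    (hA : A = (b ^ 2 / (2 * a)) * (a * r / lam - 1))
    (f : ℝ → ℝ)
    (hf : ∀ y, f y =
      if y < 0 then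
        (1 / a) * (ν + A * (1 - Real.exp (-2 * ν * a / b ^ 2)))
          + (1 / lam) * (1 - Real.exp (r * y))
      else
        (1 / a) * (-y + ν + A * (Real.exp (-2 * y * a / b ^ 2)
          - Real.exp (-2 * ν * a / b ^ 2)))) :
    StrictAntiOn f (Set.Iic ν) ∧ ∀ y ≤ ν, 0 ≤ f y ∧ f y ≤ f 0 + 1 / lam := by
  have hb2 : (0:ℝ) < b ^ 2 := by positivity
  set s := Real.sqrt (a ^ 2 + 2 * lam * b ^ 2) with hsdef
  have hs0 : 0 ≤ s := Real.sqrt_nonneg _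
  have hs2 : s ^ 2 = a ^ 2 + 2 * lam * b ^ 2 := Real.sq_sqrt (by positivity)
  have hslt : a < s := by nlinarith [mul_pos hlam hb2]
  have hr0 : 0 < r := by rw [hr]; exact div_pos (by linarith) hb2
  have har : a * r < lam := by
    have h1 : a * s < lam * b ^ 2 + a ^ 2 := by
      nlinarith [sq_nonneg (a * s - (lam * b ^ 2 + a ^ 2)), mul_pos hlam hb2]
    rw [hr]
    rw [mul_div_assoc'] at *
    rw [div_lt_iff₀ hb2]
    nlinarith
  set c : ℝ := 2 * a / b ^ 2 with hcdef
  have hc : 0 < c := by positivity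
  have hAc : A * c = a * r / lam - 1 := by
    rw [hA, hcdef]; field_simp
  have hAc0 : -1 < A * c := by
    rw [hAc]
    have : 0 < a * r / lam := by positivity
    linarith
  have hAc1 : A * c < 0 := by
    rw [hAc]
    have : a * r / lam < 1 := (div_lt_one hlam).mpr har
    linarith
  set E : ℝ := Real.exp (-2 * ν * a / b ^ 2) with hEdef
  set g : ℝ → ℝ := fun y => (1 / a) * (-y + ν + A * (Real.exp (-(c * y)) - E)) with hgdef
  have hexpeq : ∀ y : ℝ, -2 * y * a / b ^ 2 = -(c * y) := by
    intro y; rw [hcdef]; field_simp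
  have hfg : ∀ y : ℝ, 0 ≤ y → f y = g y := by
    intro y hy
    rw [hf y, if_neg (not_lt.mpr hy), hgdef]
    simp only [hexpeq y]
  -- derivative of g
  have hder : ∀ x : ℝ, HasDerivAt g ((1 / a) * (-1 + A * (Real.exp (-(c * x)) * (-c)))) x := by
    intro x
    have h1 : HasDerivAt (fun y : ℝ => -(c * y)) (-c) x := by
      simpa using ((hasDerivAt_id x).const_mul c).fun_neg
    have h2 : HasDerivAt (fun y : ℝ => Real.exp (-(c * y))) (Real.exp (-(c * x)) * (-c)) x :=
      h1.exp
    have h3 : HasDerivAt (fun y : ℝ => -y + ν + A * (Real.exp (-(c * y)) - E))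
        (-1 + A * (Real.exp (-(c * x)) * (-c))) x := by
      have h4 := (((hasDerivAt_id x).fun_neg.add_const ν).fun_add ((h2.sub_const E).const_mul A))
      simpa using h4
    exact h3.const_mul (1 / a)
  have hderneg : ∀ x : ℝ, 0 ≤ x → (1 / a) * (-1 + A * (Real.exp (-(c * x)) * (-c))) < 0 := by
    intro x hx
    have he1 : Real.exp (-(c * x)) ≤ 1 := by
      rw [Real.exp_le_one_iff]
      nlinarith
    have he0 : 0 < Real.exp (-(c * x)) := Real.exp_pos _
    have : A * (Real.exp (-(c * x)) * (-c)) = (-(A * c)) * Real.exp (-(c * x)) := by ring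
    rw [this]
    have h5 : (-(A * c)) * Real.exp (-(c * x)) < 1 := by nlinarith
    have : -1 + (-(A * c)) * Real.exp (-(c * x)) < 0 := by linarith
    have ha' : 0 < 1 / a := by positivity
    nlinarith
  -- strict anti on Icc 0 ν
  have hantig : StrictAntiOn f (Set.Icc 0 ν) := by
    apply strictAntiOn_of_deriv_neg (convex_Icc 0 ν)
    · apply ContinuousOn.congr _ (fun y hy => hfg y hy.1)
      exact fun x hx => ((hder x).continuousAt).continuousWithinAt
    · intro x hx
      rw [interior_Icc] at hx
      have hxe : f =ᶠ[nhds x] g := by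
        filter_upwards [eventually_gt_nhds hx.1] with y hy using hfg y hy.le
      rw [hxe.deriv_eq, (hder x).deriv]
      exact hderneg x hx.1.le
  -- lower branch
  set h : ℝ → ℝ := fun y => f 0 + (1 / lam) * (1 - Real.exp (r * y)) with hhdef
  have hf0 : f 0 = (1 / a) * (ν + A * (1 - E)) := by
    rw [hf 0, if_neg (lt_irrefl 0)]
    norm_num
  have hfh : ∀ y : ℝ, y ≤ 0 → f y = h y := by
    intro y hy
    rcases lt_or_eq_of_le hy with hy' | hy'
    · rw [hf y, if_pos hy']
      simp only [hhdef, hf0]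
    · subst hy'; simp [hhdef]
  have hantih : StrictAnti h := by
    intro x y hxy
    have : Real.exp (r * x) < Real.exp (r * y) :=
      Real.exp_lt_exp.mpr (by nlinarith)
    have hl : 0 < 1 / lam := by positivity
    have h6 : (1 / lam) * (1 - Real.exp (r * y)) < (1 / lam) * (1 - Real.exp (r * x)) :=
      mul_lt_mul_of_pos_left (by linarith) hl
    simp only [hhdef]
    linarith
  -- glue
  have hanti : StrictAntiOn f (Set.Iic ν) := by
    intro x hx y hy hxy
    rcases le_or_gt y 0 with hy0 | hy0
    · rw [hfh x (by linarith), hfh y hy0]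
      exact hantih hxy
    · rcases le_or_gt 0 x with hx0 | hx0
      · exact hantig ⟨hx0, hx⟩ ⟨hy0.le, hy⟩ hxy
      · have h1 : f y ≤ f 0 := by
          rcases lt_or_eq_of_le (Set.mem_Iic.mp hy) with hyy | hyy
          · exact le_of_lt (hantig ⟨le_refl 0, hν⟩ ⟨hy0.le, hy⟩ hy0)
          · subst hyy
            exact le_of_lt (hantig ⟨le_refl 0, hν⟩ ⟨hy0.le, le_refl _⟩ hy0)
        have h2 : f 0 < f x := by
          rw [hfh x hx0.le, hfh 0 (le_refl 0)]
          exact hantih hx0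
        linarith
  have hfν : f ν = 0 := by
    rw [hf ν, if_neg (not_lt.mpr hν)]
    ring
  refine ⟨hanti, fun y hy => ?_⟩
  have hmono : AntitoneOn f (Set.Iic ν) := hanti.antitoneOn
  have hlow : 0 ≤ f y := by
    rw [← hfν]
    exact hmono (Set.mem_Iic.mpr hy) (Set.mem_Iic.mpr (le_refl ν)) hy
  refine ⟨hlow, ?_⟩
  have hf00 : f 0 ≤ f 0 + 1 / lam := by
    have : 0 < 1 / lam := by positivity
    linarith
  rcases lt_or_ge y 0 with hy0 | hy0
  · rw [hfh y hy0.le]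
    have he : 0 < Real.exp (r * y) := Real.exp_pos _
    have hl : 0 < 1 / lam := by positivity
    have h7 : (1 / lam) * (1 - Real.exp (r * y)) ≤ (1 / lam) * 1 :=
      mul_le_mul_of_nonneg_left (by linarith) hl.le
    rw [mul_one] at h7
    simp only [hhdef]
    linarith
  · have : f y ≤ f 0 := hmono (Set.mem_Iic.mpr hν) (Set.mem_Iic.mpr hy) hy0
    linarith
end

section
/- Let g_{ν⋆}(0) = (2/μ²){(ν⋆ − 1 + e^{−ν⋆}) + (1/r_∞)(1 − e^{−ν⋆})} and h_{ν⋆}(0) = (2/μ²){(e^{ν⋆} − ν⋆ − 1) + (1/r₀)(e^{ν⋆} − 1)} with r₀ r_∞ = 2λ/μ², r_∞ = r₀ + 1, r₀ > 0, ν⋆ ≥ 0. Then the functions g_{ν⋆} and h_{ν⋆} defined piecewise as in the paper satisfy the identity e^y g'_{ν⋆}(y) = (r₀/r_∞) h'_{ν⋆}(y) for all y ∈ (−∞, ν⋆] (with one-sided derivatives at 0 and at ν⋆). -/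
private lemma aux_neg (c a b x : ℝ) :
    HasDerivAt (fun y => c + a * (1 - Real.exp (b * y))) (-(a * b) * Real.exp (b * x)) x := by
  have h1 : HasDerivAt (fun y : ℝ => b * y) b x := by
    simpa using (hasDerivAt_id x).const_mul b
  have h2 := (Real.hasDerivAt_exp (b * x)).comp x h1
  have h3 := ((hasDerivAt_const x (1:ℝ)).sub h2).const_mul a
  have h4 := (hasDerivAt_const x c).add h3
  convert h4 using 1 <;> first | rfl | ring

private lemma aux_gpos (k ν A C x : ℝ) :
    HasDerivAt (fun y => k * (-y + ν + A * (Real.exp (-y) - C)))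
      (k * (-1 - A * Real.exp (-x))) x := by
  have h1 : HasDerivAt (fun y : ℝ => -y) (-1) x := by
    simpa using hasDerivAt_neg' x
  have h2 := (Real.hasDerivAt_exp (-x)).comp x h1
  have h3 := (((h1.add_const ν).add ((h2.sub_const C).const_mul A))).const_mul k
  convert h3 using 1 <;> first | rfl | ring

private lemma aux_hpos (k ν A C x : ℝ) :
    HasDerivAt (fun y => k * (y - ν + A * (C - Real.exp y)))
      (k * (1 - A * Real.exp x)) x := by
  have h1 : HasDerivAt (fun y : ℝ => y) 1 x := hasDerivAt_id x
  have h2 : HasDerivAt Real.exp (Real.exp x) x := Real.hasDerivAt_exp x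
  have h3 := (((h1.sub_const ν).add (((hasDerivAt_const x C).sub h2).const_mul A))).const_mul k
  convert h3 using 1 <;> first | rfl | ring

/-- The key identity of Theorem 3: the post- and pre-change expected stopping
time functions `g` and `h` of ECUSUM with threshold `ν⋆` satisfy
`e^y g'(y) = (r₀/r_∞) h'(y)` for all `y ≤ ν⋆`. -/
theorem stmt13 (lam μ νs : ℝ) (hlam : 0 < lam) (hμ : μ ≠ 0) (hνs : 0 ≤ νs)
    (r0 rinf A0 Ainf : ℝ)
    (h0 : r0 = -1 / 2 + Real.sqrt (1 / 4 + 2 * lam / μ ^ 2))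
    (hinf : rinf = 1 / 2 + Real.sqrt (1 / 4 + 2 * lam / μ ^ 2))
    (hA0 : A0 = (μ ^ 2 / (2 * lam)) * r0 - 1)
    (hAinf : Ainf = (μ ^ 2 / (2 * lam)) * rinf + 1)
    (g h : ℝ → ℝ)
    (hg : ∀ y, g y =
      if y < 0 then
        (2 / μ ^ 2) * (νs + A0 * (1 - Real.exp (-νs)))
          + (1 / lam) * (1 - Real.exp (r0 * y))
      else
        (2 / μ ^ 2) * (-y + νs + A0 * (Real.exp (-y) - Real.exp (-νs))))
    (hhy : ∀ y, h y =
      if y < 0 then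
        (2 / μ ^ 2) * (-νs + Ainf * (Real.exp νs - 1))
          + (1 / lam) * (1 - Real.exp (rinf * y))
      else
        (2 / μ ^ 2) * (y - νs + Ainf * (Real.exp νs - Real.exp y))) :
    ∀ y ≤ νs, Real.exp y * deriv g y = (r0 / rinf) * deriv h y := by
  have hμ2 : (0:ℝ) < μ ^ 2 := by positivity
  set s := Real.sqrt (1 / 4 + 2 * lam / μ ^ 2) with hs
  have hs2 : s ^ 2 = 1 / 4 + 2 * lam / μ ^ 2 := Real.sq_sqrt (by positivity)
  have hpos : (0:ℝ) < 2 * lam / μ ^ 2 := by positivity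
  have hsgt : 1 / 2 < s := by nlinarith [Real.sqrt_nonneg (1 / 4 + 2 * lam / μ ^ 2)]
  have hr0 : 0 < r0 := by rw [h0]; linarith
  have hri : 0 < rinf := by rw [hinf]; linarith
  have hrinf : rinf = r0 + 1 := by rw [h0, hinf]; ring
  have hprod : r0 * rinf = 2 * lam / μ ^ 2 := by rw [h0, hinf]; nlinarith
  have hA0r : rinf * A0 = -r0 := by
    have e1 : μ ^ 2 / (2 * lam) * (r0 * rinf) = 1 := by
      rw [hprod]; field_simp
    rw [hA0]; nlinarith [hrinf]
  have hAir : r0 * Ainf = rinf := by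
    have e1 : μ ^ 2 / (2 * lam) * (r0 * rinf) = 1 := by
      rw [hprod]; field_simp
    rw [hAinf]; nlinarith [hrinf]
  -- branch functions
  set cg := (2 / μ ^ 2) * (νs + A0 * (1 - Real.exp (-νs))) with hcg
  set ch := (2 / μ ^ 2) * (-νs + Ainf * (Real.exp νs - 1)) with hch
  have dGneg : ∀ x, HasDerivAt (fun y => cg + (1 / lam) * (1 - Real.exp (r0 * y)))
      (-((1 / lam) * r0) * Real.exp (r0 * x)) x := fun x => aux_neg cg (1/lam) r0 x
  have dHneg : ∀ x, HasDerivAt (fun y => ch + (1 / lam) * (1 - Real.exp (rinf * y)))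
      (-((1 / lam) * rinf) * Real.exp (rinf * x)) x := fun x => aux_neg ch (1/lam) rinf x
  have dGpos : ∀ x, HasDerivAt (fun y => (2 / μ ^ 2) * (-y + νs + A0 * (Real.exp (-y) - Real.exp (-νs))))
      ((2 / μ ^ 2) * (-1 - A0 * Real.exp (-x))) x := fun x => aux_gpos _ _ _ _ x
  have dHpos : ∀ x, HasDerivAt (fun y => (2 / μ ^ 2) * (y - νs + Ainf * (Real.exp νs - Real.exp y)))
      ((2 / μ ^ 2) * (1 - Ainf * Real.exp x)) x := fun x => aux_hpos _ _ _ _ x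
  -- deriv values
  have derivg : ∀ y, deriv g y =
      if y < 0 then -((1 / lam) * r0) * Real.exp (r0 * y)
      else (2 / μ ^ 2) * (-1 - A0 * Real.exp (-y)) := by
    intro y
    rcases lt_trichotomy y 0 with hy0 | hy0 | hy0
    · rw [if_pos hy0]
      have hev : g =ᶠ[nhds y] (fun y => cg + (1 / lam) * (1 - Real.exp (r0 * y))) := by
        filter_upwards [Iio_mem_nhds hy0] with z hz
        rw [hg z, if_pos (Set.mem_Iio.mp hz)]
      rw [hev.deriv_eq, (dGneg y).deriv]
    · subst hy0
      rw [if_neg (lt_irrefl 0)]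
      have hIci : Set.EqOn g (fun y => (2 / μ ^ 2) * (-y + νs + A0 * (Real.exp (-y) - Real.exp (-νs)))) (Set.Ici 0) := by
        intro z hz
        rw [hg z, if_neg (not_lt.mpr (Set.mem_Ici.mp hz))]
      have hIic : Set.EqOn g (fun y => cg + (1 / lam) * (1 - Real.exp (r0 * y))) (Set.Iic 0) := by
        intro z hz
        rcases lt_or_eq_of_le (Set.mem_Iic.mp hz) with hz' | hz'
        · rw [hg z, if_pos hz']
        · subst hz'
          rw [hg 0, if_neg (lt_irrefl 0)]
          simp [hcg]
      have hmatch : -((1 / lam) * r0) * Real.exp (r0 * 0) = (2 / μ ^ 2) * (-1 - A0 * Real.exp (-(0:ℝ))) := by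
        simp only [mul_zero, neg_zero, Real.exp_zero, mul_one]
        rw [hA0]
        field_simp
        ring
      have hleft : HasDerivWithinAt g ((2 / μ ^ 2) * (-1 - A0 * Real.exp (-(0:ℝ)))) (Set.Iic 0) 0 := by
        refine HasDerivWithinAt.congr ?_ hIic (hIic (Set.mem_Iic.mpr le_rfl))
        exact hmatch ▸ (dGneg 0).hasDerivWithinAt
      have hright : HasDerivWithinAt g ((2 / μ ^ 2) * (-1 - A0 * Real.exp (-(0:ℝ)))) (Set.Ici 0) 0 := by
        refine HasDerivWithinAt.congr ?_ hIci (hIci (Set.mem_Ici.mpr le_rfl))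
        exact (dGpos 0).hasDerivWithinAt
      have := hleft.union hright
      rw [Set.Iic_union_Ici] at this
      exact (this.hasDerivAt (Filter.univ_mem)).deriv
    · rw [if_neg (not_lt.mpr hy0.le)]
      have hev : g =ᶠ[nhds y] (fun y => (2 / μ ^ 2) * (-y + νs + A0 * (Real.exp (-y) - Real.exp (-νs)))) := by
        filter_upwards [Ioi_mem_nhds hy0] with z hz
        rw [hg z, if_neg (not_lt.mpr (le_of_lt hz))]
      rw [hev.deriv_eq, (dGpos y).deriv]
  have derivh : ∀ y, deriv h y =
      if y < 0 then -((1 / lam) * rinf) * Real.exp (rinf * y)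
      else (2 / μ ^ 2) * (1 - Ainf * Real.exp y) := by
    intro y
    rcases lt_trichotomy y 0 with hy0 | hy0 | hy0
    · rw [if_pos hy0]
      have hev : h =ᶠ[nhds y] (fun y => ch + (1 / lam) * (1 - Real.exp (rinf * y))) := by
        filter_upwards [Iio_mem_nhds hy0] with z hz
        rw [hhy z, if_pos (Set.mem_Iio.mp hz)]
      rw [hev.deriv_eq, (dHneg y).deriv]
    · subst hy0
      rw [if_neg (lt_irrefl 0)]
      have hIci : Set.EqOn h (fun y => (2 / μ ^ 2) * (y - νs + Ainf * (Real.exp νs - Real.exp y))) (Set.Ici 0) := by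
        intro z hz
        rw [hhy z, if_neg (not_lt.mpr (Set.mem_Ici.mp hz))]
      have hIic : Set.EqOn h (fun y => ch + (1 / lam) * (1 - Real.exp (rinf * y))) (Set.Iic 0) := by
        intro z hz
        rcases lt_or_eq_of_le (Set.mem_Iic.mp hz) with hz' | hz'
        · rw [hhy z, if_pos hz']
        · subst hz'
          rw [hhy 0, if_neg (lt_irrefl 0)]
          simp [hch]
      have hmatch : -((1 / lam) * rinf) * Real.exp (rinf * 0) = (2 / μ ^ 2) * (1 - Ainf * Real.exp (0:ℝ)) := by
        simp only [mul_zero, Real.exp_zero, mul_one]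
        rw [hAinf]
        field_simp
        ring
      have hleft : HasDerivWithinAt h ((2 / μ ^ 2) * (1 - Ainf * Real.exp (0:ℝ))) (Set.Iic 0) 0 := by
        refine HasDerivWithinAt.congr ?_ hIic (hIic (Set.mem_Iic.mpr le_rfl))
        exact hmatch ▸ (dHneg 0).hasDerivWithinAt
      have hright : HasDerivWithinAt h ((2 / μ ^ 2) * (1 - Ainf * Real.exp (0:ℝ))) (Set.Ici 0) 0 := by
        refine HasDerivWithinAt.congr ?_ hIci (hIci (Set.mem_Ici.mpr le_rfl))
        exact (dHpos 0).hasDerivWithinAt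
      have := hleft.union hright
      rw [Set.Iic_union_Ici] at this
      exact (this.hasDerivAt (Filter.univ_mem)).deriv
    · rw [if_neg (not_lt.mpr hy0.le)]
      have hev : h =ᶠ[nhds y] (fun y => (2 / μ ^ 2) * (y - νs + Ainf * (Real.exp νs - Real.exp y))) := by
        filter_upwards [Ioi_mem_nhds hy0] with z hz
        rw [hhy z, if_neg (not_lt.mpr (le_of_lt hz))]
      rw [hev.deriv_eq, (dHpos y).deriv]
  intro y _
  rw [derivg y, derivh y]
  by_cases hy0 : y < 0
  · rw [if_pos hy0, if_pos hy0, hrinf]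
    have he : Real.exp ((r0 + 1) * y) = Real.exp (r0 * y) * Real.exp y := by
      rw [← Real.exp_add]; ring_nf
    rw [he]
    have hrine : r0 + 1 ≠ 0 := by rw [← hrinf]; exact ne_of_gt hri
    field_simp
  · rw [if_neg hy0, if_neg hy0]
    have hEF : Real.exp y * Real.exp (-y) = 1 := by
      rw [← Real.exp_add]; simp
    have hrine : rinf ≠ 0 := ne_of_gt hri
    have hA0' : r0 / rinf = -A0 := by
      rw [div_eq_iff hrine]; linarith [hA0r]
    have hAA : A0 * Ainf = -1 := by
      have h2 : (A0 * Ainf) * (r0 * rinf) = (-1) * (r0 * rinf) := by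
        linear_combination (r0 * Ainf) * hA0r + (-r0) * hAir
      exact mul_right_cancel₀ (by positivity) h2
    rw [hA0']
    linear_combination (-(2 / μ ^ 2) * A0) * hEF + (-(2 / μ ^ 2) * Real.exp y) * hAA
end

section
/- With g_{ν⋆} and h_{ν⋆} as in the previous context, define p(y) = e^y g_{ν⋆}(y) − (r₀/r_∞) h_{ν⋆}(y) for y ∈ (−∞, ν⋆]. Then p'(y) = e^y g_{ν⋆}(y), p has a global maximum at y = ν⋆, p(ν⋆) = 0, and hence p(y) ≤ 0 for all y ≤ ν⋆. -/
set_option maxHeartbeats 1000000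


/-- Theorem 3 (key function): with `p(y) = e^y g(y) − (r₀/r_∞) h(y)` one has
`p'(y) = e^y g(y)`, `p` attains its global maximum on `(−∞, ν⋆]` at `y = ν⋆`,
`p(ν⋆) = 0`, and hence `p(y) ≤ 0` for all `y ≤ ν⋆`. -/
theorem stmt14 (lam μ νs : ℝ) (hlam : 0 < lam) (hμ : μ ≠ 0) (hνs : 0 ≤ νs)
    (r0 rinf A0 Ainf : ℝ)
    (h0 : r0 = -1 / 2 + Real.sqrt (1 / 4 + 2 * lam / μ ^ 2))
    (hinf : rinf = 1 / 2 + Real.sqrt (1 / 4 + 2 * lam / μ ^ 2))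
    (hA0 : A0 = (μ ^ 2 / (2 * lam)) * r0 - 1)
    (hAinf : Ainf = (μ ^ 2 / (2 * lam)) * rinf + 1)
    (g h p : ℝ → ℝ)
    (hg : ∀ y, g y =
      if y < 0 then
        (2 / μ ^ 2) * (νs + A0 * (1 - Real.exp (-νs)))
          + (1 / lam) * (1 - Real.exp (r0 * y))
      else
        (2 / μ ^ 2) * (-y + νs + A0 * (Real.exp (-y) - Real.exp (-νs))))
    (hhy : ∀ y, h y =
      if y < 0 then
        (2 / μ ^ 2) * (-νs + Ainf * (Real.exp νs - 1))
          + (1 / lam) * (1 - Real.exp (rinf * y))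
      else
        (2 / μ ^ 2) * (y - νs + Ainf * (Real.exp νs - Real.exp y)))
    (hp : ∀ y, p y = Real.exp y * g y - (r0 / rinf) * h y) :
    (∀ y ≤ νs, deriv p y = Real.exp y * g y) ∧
      (∀ y ≤ νs, p y ≤ p νs) ∧ p νs = 0 ∧ ∀ y ≤ νs, p y ≤ 0 := by
  have hμ2 : (0 : ℝ) < μ ^ 2 := by positivity
  have hlamne : lam ≠ 0 := ne_of_gt hlam
  set S := Real.sqrt (1 / 4 + 2 * lam / μ ^ 2) with hS
  have hSsq : S ^ 2 = 1 / 4 + 2 * lam / μ ^ 2 := Real.sq_sqrt (by positivity)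
  have hSnn : 0 ≤ S := Real.sqrt_nonneg _
  have ht : 0 < 2 * lam / μ ^ 2 := by positivity
  have hShalf : 1 / 2 < S := by nlinarith [hSsq, hSnn, ht]
  have hr0pos : 0 < r0 := by rw [h0]; linarith
  have hrinfpos : 0 < rinf := by rw [hinf]; linarith
  have hrinfne : rinf ≠ 0 := ne_of_gt hrinfpos
  have hr0ne : r0 ≠ 0 := ne_of_gt hr0pos
  have hri : rinf = r0 + 1 := by rw [h0, hinf]; ring
  have hSsq2 : S ^ 2 * μ ^ 2 = μ ^ 2 / 4 + 2 * lam := by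
    rw [hSsq]; field_simp
  have hprod : μ ^ 2 * (r0 * rinf) = 2 * lam := by
    rw [h0, hinf]; linear_combination hSsq2
  have hA0ge : -1 ≤ A0 := by
    rw [hA0]
    have : 0 ≤ μ ^ 2 / (2 * lam) * r0 := by positivity
    linarith
  -- little exp helpers
  have hexple1 : ∀ x : ℝ, x ≤ 0 → Real.exp x ≤ 1 := by
    intro x hx
    simpa using Real.exp_le_exp.2 hx
  have hexpbd : ∀ a b : ℝ, a ≤ b → 0 ≤ a →
      Real.exp (-a) - Real.exp (-b) ≤ b - a := by
    intro a b hab ha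
    have h1 := Real.add_one_le_exp (a - b)
    have h2 : Real.exp (a - b) * Real.exp (-a) = Real.exp (-b) := by
      rw [← Real.exp_add]; ring_nf
    have h3 : Real.exp (-a) ≤ 1 := hexple1 _ (by linarith)
    nlinarith [mul_le_mul_of_nonneg_right h1 (Real.exp_pos (-a)).le,
      Real.exp_pos (-a)]
  -- nonnegativity of g on (-∞, νs]
  have hgpos : ∀ y ≤ νs, 0 ≤ g y := by
    intro y hy
    rw [hg y]
    by_cases hy0 : y < 0
    · rw [if_pos hy0]
      have hb : 1 - Real.exp (-νs) ≤ νs := by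
        have := hexpbd 0 νs hνs le_rfl
        simpa using this
      have hbn : 0 ≤ 1 - Real.exp (-νs) := by
        have := hexple1 (-νs) (by linarith)
        linarith
      have t1 : 0 ≤ νs + A0 * (1 - Real.exp (-νs)) := by
        nlinarith [mul_le_mul_of_nonneg_right hA0ge hbn]
      have t2 : Real.exp (r0 * y) ≤ 1 :=
        hexple1 _ (by nlinarith)
      have := mul_nonneg (le_of_lt (by positivity : (0:ℝ) < 2 / μ ^ 2)) t1
      have := mul_nonneg (le_of_lt (by positivity : (0:ℝ) < 1 / lam)) (by linarith : (0:ℝ) ≤ 1 - Real.exp (r0 * y))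
      linarith
    · rw [if_neg hy0]
      push_neg at hy0
      have hΔn : 0 ≤ Real.exp (-y) - Real.exp (-νs) :=
        sub_nonneg.2 (Real.exp_le_exp.2 (by linarith))
      have hΔb := hexpbd y νs hy hy0
      apply mul_nonneg (le_of_lt (by positivity : (0:ℝ) < 2 / μ ^ 2))
      nlinarith [mul_le_mul_of_nonneg_right hA0ge hΔn]
  -- the two smooth extensions
  set Fp : ℝ → ℝ := fun y =>
    (2 / μ ^ 2) * (Real.exp y * (-y + νs) + A0 * (1 - Real.exp (y - νs))) -
      (r0 / rinf) * ((2 / μ ^ 2) * (y - νs + Ainf * (Real.exp νs - Real.exp y)))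
    with hFpdef
  set Fm : ℝ → ℝ := fun y =>
    ((2 / μ ^ 2) * (νs + A0 * (1 - Real.exp (-νs))) + 1 / lam) * Real.exp y -
      (1 / (rinf * lam)) * Real.exp (rinf * y) -
      (r0 / rinf) * ((2 / μ ^ 2) * (-νs + Ainf * (Real.exp νs - 1)) + 1 / lam)
    with hFmdef
  have hpFp : ∀ y, 0 ≤ y → p y = Fp y := by
    intro y hy
    rw [hp y, hg y, hhy y, if_neg (not_lt.2 hy), if_neg (not_lt.2 hy), hFpdef]
    have e1 : Real.exp y * Real.exp (-y) = 1 := by rw [← Real.exp_add]; simp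
    have e2 : Real.exp y * Real.exp (-νs) = Real.exp (y - νs) := by
      rw [← Real.exp_add]; ring_nf
    linear_combination (2 / μ ^ 2 * A0) * e1 - (2 / μ ^ 2 * A0) * e2
  have hpFm : ∀ y, y < 0 → p y = Fm y := by
    intro y hy
    rw [hp y, hg y, hhy y, if_pos hy, if_pos hy, hFmdef]
    have e3 : Real.exp (rinf * y) = Real.exp y * Real.exp (r0 * y) := by
      rw [← Real.exp_add]; congr 1; rw [hri]; ring
    have hc : -(1 / lam) + r0 / (rinf * lam) + 1 / (rinf * lam) = 0 := by
      rw [hri]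
      have h1 : r0 + 1 ≠ 0 := by positivity
      field_simp
      ring
    linear_combination (1 / lam) * e3 + Real.exp (rinf * y) * hc
  -- derivatives of the smooth extensions
  have hFpD : ∀ x, HasDerivAt Fp
      ((2 / μ ^ 2) * ((Real.exp x * (-x + νs) + Real.exp x * (-1)) +
        A0 * (0 - Real.exp (x - νs) * 1)) -
        (r0 / rinf) * ((2 / μ ^ 2) * (1 + Ainf * (0 - Real.exp x)))) x := by
    intro x
    have h1 : HasDerivAt (fun y => Real.exp y * (-y + νs))
        (Real.exp x * (-x + νs) + Real.exp x * (-1)) x :=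
      (Real.hasDerivAt_exp x).mul (((hasDerivAt_id x).neg).add_const νs)
    have h2 : HasDerivAt (fun y : ℝ => Real.exp (y - νs))
        (Real.exp (x - νs) * 1) x :=
      (((hasDerivAt_id x).sub_const νs)).exp
    have h4 : HasDerivAt (fun y : ℝ => A0 * (1 - Real.exp (y - νs)))
        (A0 * (0 - Real.exp (x - νs) * 1)) x :=
      ((hasDerivAt_const x (1 : ℝ)).sub h2).const_mul A0
    have h3 : HasDerivAt (fun y : ℝ => y - νs + Ainf * (Real.exp νs - Real.exp y))
        (1 + Ainf * (0 - Real.exp x)) x :=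
      ((hasDerivAt_id x).sub_const νs).add
        (((hasDerivAt_const x (Real.exp νs)).sub (Real.hasDerivAt_exp x)).const_mul Ainf)
    exact ((h1.add h4).const_mul (2 / μ ^ 2)).sub ((h3.const_mul (2 / μ ^ 2)).const_mul (r0 / rinf))
  have hFmD : ∀ x, HasDerivAt Fm
      (((2 / μ ^ 2) * (νs + A0 * (1 - Real.exp (-νs))) + 1 / lam) * Real.exp x -
        (1 / (rinf * lam)) * (Real.exp (rinf * x) * rinf)) x := by
    intro x
    have h1 : HasDerivAt (fun y : ℝ =>
        ((2 / μ ^ 2) * (νs + A0 * (1 - Real.exp (-νs))) + 1 / lam) * Real.exp y)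
        (((2 / μ ^ 2) * (νs + A0 * (1 - Real.exp (-νs))) + 1 / lam) * Real.exp x) x :=
      (Real.hasDerivAt_exp x).const_mul _
    have h2 : HasDerivAt (fun y : ℝ => Real.exp (rinf * y))
        (Real.exp (rinf * x) * rinf) x := by
      simpa using ((hasDerivAt_id x).const_mul rinf).exp
    exact ((h1.sub (h2.const_mul (1 / (rinf * lam)))).sub_const _)
  -- algebraic identity: the extra terms cancel
  have hfrac0 : μ ^ 2 / (2 * lam) * r0 = 1 / rinf := by
    field_simp
    linear_combination hprod
  have hfracinf : μ ^ 2 / (2 * lam) * rinf = 1 / r0 := by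
    field_simp
    linear_combination hprod
  have hcancel : ∀ X : ℝ,
      (2 / μ ^ 2) * (-X - A0) - (r0 / rinf) * ((2 / μ ^ 2) * (1 - Ainf * X)) = 0 := by
    intro X
    rw [hA0, hAinf, hfrac0, hfracinf, hri]
    have h1 : r0 + 1 ≠ 0 := by positivity
    field_simp
    ring
  -- derivative value equals exp x * g x on each side
  have hDp : ∀ x, 0 ≤ x →
      (2 / μ ^ 2) * ((Real.exp x * (-x + νs) + Real.exp x * (-1)) +
        A0 * (0 - Real.exp (x - νs) * 1)) -
        (r0 / rinf) * ((2 / μ ^ 2) * (1 + Ainf * (0 - Real.exp x))) =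
        Real.exp x * g x := by
    intro x hx
    rw [hg x, if_neg (not_lt.2 hx)]
    have e1 : Real.exp x * Real.exp (-x) = 1 := by
      rw [← Real.exp_add]; simp
    have e2 : Real.exp x * Real.exp (-νs) = Real.exp (x - νs) := by
      rw [← Real.exp_add]; ring_nf
    have := hcancel (Real.exp x)
    linear_combination this + (2 / μ ^ 2 * A0) * e2 - (2 / μ ^ 2 * A0) * e1
  have hDm : ∀ x, x ≤ 0 →
      ((2 / μ ^ 2) * (νs + A0 * (1 - Real.exp (-νs))) + 1 / lam) * Real.exp x -
        (1 / (rinf * lam)) * (Real.exp (rinf * x) * rinf) =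
        Real.exp x * g x := by
    intro x hx
    have e3 : Real.exp (rinf * x) = Real.exp x * Real.exp (r0 * x) := by
      rw [← Real.exp_add]; congr 1; rw [hri]; ring
    rcases lt_or_eq_of_le hx with hx' | hx'
    · rw [hg x, if_pos hx']
      rw [e3]
      field_simp
      ring
    · subst hx'
      rw [hg 0, if_neg (lt_irrefl 0)]
      simp [Real.exp_zero]
      field_simp
      ring
  -- the key derivative fact everywhere
  have hkey : ∀ x, HasDerivAt p (Real.exp x * g x) x := by
    intro x
    rcases lt_trichotomy x 0 with hx | hx | hx
    · have hev : p =ᶠ[nhds x] Fm := by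
        filter_upwards [Iio_mem_nhds hx] with y hy using hpFm y hy
      have hd : HasDerivAt Fm (Real.exp x * g x) x := by
        rw [← hDm x hx.le]; exact hFmD x
      exact hd.congr_of_eventuallyEq hev
    · subst hx
      have hFp0 : HasDerivAt Fp (Real.exp 0 * g 0) 0 := by
        rw [← hDp 0 le_rfl]; exact hFpD 0
      have hFm0 : HasDerivAt Fm (Real.exp 0 * g 0) 0 := by
        rw [← hDm 0 le_rfl]; exact hFmD 0
      have hD : HasDerivAt (fun y => Fm y - Fp y) 0 0 := by
        have h := hFm0.sub hFp0; rw [sub_self] at h; exact h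
      have hD0 : Fm 0 - Fp 0 = 0 := by
        rw [hFmdef, hFpdef]
        simp only [Real.exp_zero, mul_zero, zero_sub, mul_one]
        rw [hri]
        have h1 : r0 + 1 ≠ 0 := by positivity
        field_simp
        ring
      rw [hasDerivAt_iff_isLittleO]
      have hfp := hasDerivAt_iff_isLittleO.mp hFp0
      have hd := hasDerivAt_iff_isLittleO.mp hD
      have heq : (fun y => p y - p 0 - (y - 0) • (Real.exp 0 * g 0)) =
          (fun y => (Fp y - Fp 0 - (y - 0) • (Real.exp 0 * g 0)) + (p y - Fp y)) := by
        funext y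
        have h00 : p 0 = Fp 0 := hpFp 0 le_rfl
        rw [h00]; ring
      rw [heq]
      refine hfp.add ?_
      refine (Asymptotics.IsBigO.trans_isLittleO ?_ hd)
      apply Asymptotics.isBigO_of_le
      intro y
      rcases lt_or_ge y 0 with hy | hy
      · rw [hpFm y hy]
        simp [hD0]
      · rw [hpFp y hy]
        simp
    · have hev : p =ᶠ[nhds x] Fp := by
        filter_upwards [Ioi_mem_nhds hx] with y hy using hpFp y (le_of_lt hy)
      have hd : HasDerivAt Fp (Real.exp x * g x) x := by
        rw [← hDp x hx.le]; exact hFpD x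
      exact hd.congr_of_eventuallyEq hev
  -- monotonicity
  have hmono : MonotoneOn p (Set.Iic νs) := by
    apply monotoneOn_of_deriv_nonneg (convex_Iic νs)
    · exact fun x _ => ((hkey x).differentiableAt.continuousAt).continuousWithinAt
    · intro x hx
      exact (hkey x).differentiableAt.differentiableWithinAt
    · intro x hx
      rw [interior_Iic] at hx
      rw [(hkey x).deriv]
      exact mul_nonneg (Real.exp_pos x).le (hgpos x hx.le)
  have hgν : g νs = 0 := by rw [hg νs, if_neg (not_lt.2 hνs)]; ring
  have hhν : h νs = 0 := by rw [hhy νs, if_neg (not_lt.2 hνs)]; ring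
  have hpν : p νs = 0 := by rw [hp νs, hgν, hhν]; ring
  refine ⟨fun y _ => (hkey y).deriv, fun y hy => hmono (Set.mem_Iic.2 hy) Set.self_mem_Iic hy,
    hpν, fun y hy => ?_⟩
  have := hmono (Set.mem_Iic.2 hy) Set.self_mem_Iic hy
  linarith [hpν ▸ this]
end

section
/- With g_ν(y) as in the previous contexts (post-change expected delay function for ECUSUM with threshold ν ≥ 0, parameters μ ≠ 0, λ > 0), g_ν is strictly decreasing on (−∞, ν], g_ν(ν) = 0, g_ν(y) > 0 for y < ν, and sup_{y ≤ ν} g_ν(y) = g_ν(0) + 1/λ attained in the limit y → −∞; in particular g_ν(y) ≤ 1/λ + g_ν(0) for all y, which is the continuous-time version of the bound E[S̃_ν | y₀ = y] ≤ 1/λ + E[S_ν]. -/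
/-- Lemma 3 (analytic version): the post-change expected delay function `g` of
ECUSUM is strictly decreasing on `(−∞, ν]` with `g(ν) = 0`, positive on
`(−∞, ν)`, its supremum over `(−∞, ν]` equals `g(0) + 1/λ` and is attained in
the limit `y → −∞`; in particular `g(y) ≤ 1/λ + g(0)` for all `y ≤ ν`. -/
theorem stmt15 (lam μ ν : ℝ) (hlam : 0 < lam) (hμ : μ ≠ 0) (hν : 0 ≤ ν)
    (r0 A0 : ℝ)
    (h0 : r0 = -1 / 2 + Real.sqrt (1 / 4 + 2 * lam / μ ^ 2))
    (hA0 : A0 = (μ ^ 2 / (2 * lam)) * r0 - 1)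
    (g : ℝ → ℝ)
    (hg : ∀ y, g y =
      if y < 0 then
        (2 / μ ^ 2) * (ν + A0 * (1 - Real.exp (-ν)))
          + (1 / lam) * (1 - Real.exp (r0 * y))
      else
        (2 / μ ^ 2) * (-y + ν + A0 * (Real.exp (-y) - Real.exp (-ν)))) :
    StrictAntiOn g (Set.Iic ν) ∧ g ν = 0 ∧ (∀ y < ν, 0 < g y) ∧
      Filter.Tendsto g Filter.atBot (nhds (g 0 + 1 / lam)) ∧
      sSup (g '' Set.Iic ν) = g 0 + 1 / lam ∧
      ∀ y ≤ ν, g y ≤ 1 / lam + g 0 := by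
  have hμ2 : (0:ℝ) < μ ^ 2 := by positivity
  have hr0 : 0 < r0 := by
    rw [h0]
    have harg : (0:ℝ) < 2 * lam / μ ^ 2 := by positivity
    have h1 : (1:ℝ)/2 < Real.sqrt (1 / 4 + 2 * lam / μ ^ 2) := by
      have := Real.sqrt_lt_sqrt (by norm_num : (0:ℝ) ≤ 1/4)
        (by linarith : (1:ℝ)/4 < 1 / 4 + 2 * lam / μ ^ 2)
      have h14 : Real.sqrt (1/4 : ℝ) = 1/2 := by
        rw [show (1:ℝ)/4 = (1/2)^2 by norm_num, Real.sqrt_sq (by norm_num)]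
      linarith [h14 ▸ this]
    linarith
  have hA1 : 0 < A0 + 1 := by
    rw [hA0]
    have : 0 < μ ^ 2 / (2 * lam) * r0 := by positivity
    linarith
  -- set C
  set C : ℝ := (2 / μ ^ 2) * (ν + A0 * (1 - Real.exp (-ν))) with hC
  have hg0 : g 0 = C := by
    rw [hg 0, if_neg (by norm_num)]
    simp [Real.exp_zero, hC]
  -- monotonicity on the nonnegative part (no upper restriction needed)
  have key : ∀ a b : ℝ, 0 ≤ a → a < b → g b < g a := by
    intro a b ha hab
    rw [hg a, hg b, if_neg (not_lt.2 ha), if_neg (not_lt.2 (by linarith : (0:ℝ) ≤ b))]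
    have hd : 0 < Real.exp (-a) - Real.exp (-b) :=
      sub_pos.2 (Real.exp_lt_exp.2 (by linarith))
    have hub : Real.exp (-a) - Real.exp (-b) ≤ b - a := by
      have h1 : Real.exp (a - b) * Real.exp (-a) = Real.exp (-b) := by
        rw [← Real.exp_add]; ring_nf
      have h2 : 1 + (a - b) ≤ Real.exp (a - b) := by
        linarith [Real.add_one_le_exp (a - b)]
      have h3 : Real.exp (-a) ≤ 1 := Real.exp_le_one_iff.2 (by linarith)
      have h4 : 0 < Real.exp (-a) := Real.exp_pos _
      nlinarith
    have hpos : (0:ℝ) < 2 / μ ^ 2 := by positivity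
    have hinner : -b + ν + A0 * (Real.exp (-b) - Real.exp (-ν)) <
        -a + ν + A0 * (Real.exp (-a) - Real.exp (-ν)) := by
      nlinarith [mul_pos hA1 hd]
    exact mul_lt_mul_of_pos_left hinner hpos
  have keyle : ∀ b : ℝ, 0 ≤ b → g b ≤ g 0 := by
    intro b hb
    rcases eq_or_lt_of_le hb with h | h
    · exact le_of_eq (by rw [← h])
    · exact le_of_lt (key 0 b le_rfl h)
  -- negative branch facts
  have hneg : ∀ y : ℝ, y < 0 → g y = C + (1 / lam) * (1 - Real.exp (r0 * y)) := by
    intro y hy; rw [hg y, if_pos hy]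
  have hgC : ∀ y : ℝ, y < 0 → C < g y := by
    intro y hy
    rw [hneg y hy]
    have : Real.exp (r0 * y) < 1 := by
      rw [← Real.exp_zero]
      exact Real.exp_lt_exp.2 (by nlinarith)
    have h1 : 0 < (1 / lam) * (1 - Real.exp (r0 * y)) := by
      apply mul_pos (by positivity); linarith
    linarith
  -- strict antitonicity
  have hanti : StrictAntiOn g (Set.Iic ν) := by
    intro a _ b _ hab
    rcases lt_or_ge b 0 with hb | hb
    · -- a < b < 0
      rw [hneg a (by linarith), hneg b hb]
      have : Real.exp (r0 * a) < Real.exp (r0 * b) :=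
        Real.exp_lt_exp.2 (by nlinarith)
      have h1 : 0 < 1 / lam := by positivity
      nlinarith
    · rcases lt_or_ge a 0 with ha | ha
      · -- a < 0 ≤ b
        calc g b ≤ g 0 := keyle b hb
          _ = C := hg0
          _ < g a := hgC a ha
      · exact key a b ha hab
  -- g ν = 0
  have hgν : g ν = 0 := by
    rw [hg ν, if_neg (not_lt.2 hν)]; ring
  -- positivity
  have hpos : ∀ y < ν, 0 < g y := by
    intro y hy
    have := hanti (Set.mem_Iic.2 hy.le) (Set.mem_Iic.2 le_rfl) hy
    rwa [hgν] at this
  -- tendsto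
  have htend : Filter.Tendsto g Filter.atBot (nhds (g 0 + 1 / lam)) := by
    have h1 : Filter.Tendsto (fun y : ℝ => r0 * y) Filter.atBot Filter.atBot :=
      Filter.Tendsto.const_mul_atBot hr0 Filter.tendsto_id
    have h2 : Filter.Tendsto (fun y : ℝ => Real.exp (r0 * y)) Filter.atBot (nhds 0) :=
      Real.tendsto_exp_atBot.comp h1
    have h3 : Filter.Tendsto (fun y : ℝ => C + (1 / lam) * (1 - Real.exp (r0 * y)))
        Filter.atBot (nhds (C + (1 / lam) * (1 - 0))) :=
      Filter.Tendsto.const_add _ ((tendsto_const_nhds.sub h2).const_mul _)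
    have heq : (fun y : ℝ => C + (1 / lam) * (1 - Real.exp (r0 * y))) =ᶠ[Filter.atBot] g := by
      filter_upwards [Filter.eventually_lt_atBot (0:ℝ)] with y hy
      exact (hneg y hy).symm
    have := h3.congr' heq
    rwa [← hg0, sub_zero, mul_one] at this
  -- upper bound
  have hub : ∀ y ∈ Set.Iic ν, g y ≤ g 0 + 1 / lam := by
    intro y hy
    rcases lt_or_ge y 0 with h | h
    · rw [hneg y h, hg0]
      have h1 : 0 < Real.exp (r0 * y) := Real.exp_pos _
      have h2 : (1 / lam) * (1 - Real.exp (r0 * y)) ≤ (1 / lam) * 1 := by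
        apply mul_le_mul_of_nonneg_left (by linarith) (by positivity)
      linarith
    · have := keyle y h
      have h1 : 0 < 1 / lam := by positivity
      linarith
  -- sSup
  have hsup : sSup (g '' Set.Iic ν) = g 0 + 1 / lam := by
    apply IsLUB.csSup_eq
    · constructor
      · rintro x ⟨y, hy, rfl⟩
        exact hub y hy
      · intro b hb
        apply le_of_tendsto htend
        filter_upwards [Filter.eventually_le_atBot ν] with y hy
        exact hb ⟨y, Set.mem_Iic.2 hy, rfl⟩
    · exact ⟨g ν, Set.mem_image_of_mem g (Set.mem_Iic.2 le_rfl)⟩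
  exact ⟨hanti, hgν, hpos, htend, hsup, fun y hy => by linarith [hub y (Set.mem_Iic.2 hy)]⟩
end
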